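/- Let R > 0 and consider B(0,R) ⊂ ℝ², with points z = (x, y) and z⊥ = (y, −x), and let u_R(z) = πR²/8 + (|z|/4)·√(R² − |z|²) − (R²/4)·arcsin(|z|/R). Suppose ρ : B(0,R) → ℝ is continuously differentiable and φ : B(0,R) → ℝ is twice continuously differentiable, and that ∇φ(z) = ρ(z)·(∇u_R(z) + z⊥/2) for every z ∈ B(0,R). Then ρ ≡ 0 on B(0,R), and hence ∇φ ≡ 0. -/

import Mathlib

open Metric Real

/-- The map `z = (x, y) ↦ z⊥ = (y, -x)` on `ℝ²`. -/
noncomputable def zperp2 (z : EuclideanSpace ℝ (Fin 2)) : EuclideanSpace ℝ (Fin 2) :=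
  WithLp.toLp 2 ![z 1, -z 0]

/-- The candidate isoperimetric profile `u_R` on `ℝ²`. -/
noncomputable def uR2 (R : ℝ) (z : EuclideanSpace ℝ (Fin 2)) : ℝ :=
  π * R ^ 2 / 8 + ‖z‖ / 4 * Real.sqrt (R ^ 2 - ‖z‖ ^ 2) - R ^ 2 / 4 * Real.arcsin (‖z‖ / R)

noncomputable section StmtAux

abbrev E2 := EuclideanSpace ℝ (Fin 2)
def ee0 : E2 := EuclideanSpace.single 0 1
def ee1 : E2 := EuclideanSpace.single 1 1
def aR (R : ℝ) (w : E2) : ℝ := ‖w‖ / (2 * Real.sqrt (R ^ 2 - ‖w‖ ^ 2))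
def VV0 (R : ℝ) (w : E2) : ℝ := -aR R w * w 0 + 2⁻¹ * w 1
def VV1 (R : ℝ) (w : E2) : ℝ := -aR R w * w 1 - 2⁻¹ * w 0
def GG (R s : ℝ) : ℝ := π * R ^ 2 / 8 + Real.sqrt s / 4 * Real.sqrt (R ^ 2 - s)
  - R ^ 2 / 4 * Real.arcsin (Real.sqrt s / R)

lemma hasFDerivAt_normsq (w : E2) :
    HasFDerivAt (fun w : E2 => ‖w‖^2) ((2:ℝ) • innerSL ℝ w) w := by
  have h := (hasFDerivAt_id w).inner ℝ (hasFDerivAt_id w)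
  simp only [id_eq] at h
  have e : (fun t : E2 => @inner ℝ _ _ t t) = fun t : E2 => ‖t‖^2 := by
    funext t; exact real_inner_self_eq_norm_sq t
  rw [e] at h
  refine h.congr_fderiv ?_
  ext v
  simp [fderivInnerCLM_apply, real_inner_comm, two_mul]

lemma hasDerivAt_GG {R s : ℝ} (hR : 0 < R) (h0 : 0 < s) (h1 : s < R ^ 2) :
    HasDerivAt (GG R) (-(Real.sqrt s / (4 * Real.sqrt (R ^ 2 - s)))) s := by
  have hs' : (0:ℝ) < R ^ 2 - s := by linarith
  have hA : (0:ℝ) < Real.sqrt s := Real.sqrt_pos.2 h0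
  have hB : (0:ℝ) < Real.sqrt (R ^ 2 - s) := Real.sqrt_pos.2 hs'
  have hA2 : Real.sqrt s ^ 2 = s := Real.sq_sqrt h0.le
  have hB2 : Real.sqrt (R ^ 2 - s) ^ 2 = R ^ 2 - s := Real.sq_sqrt hs'.le
  have hAR : Real.sqrt s < R := by
    have := Real.sqrt_lt_sqrt h0.le h1
    rwa [Real.sqrt_sq hR.le] at this
  -- derivative of sqrt s
  have hds : HasDerivAt Real.sqrt (1 / (2 * Real.sqrt s)) s := hasDerivAt_sqrt h0.ne'
  -- derivative of sqrt (R^2 - s)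
  have hsub : HasDerivAt (fun t : ℝ => R ^ 2 - t) (-1) s := by
    simpa using (hasDerivAt_id s).const_sub (R ^ 2)
  have hdB : HasDerivAt (fun t : ℝ => Real.sqrt (R ^ 2 - t))
      (1 / (2 * Real.sqrt (R ^ 2 - s)) * (-1)) s :=
    (hasDerivAt_sqrt hs'.ne').comp s hsub
  -- derivative of arcsin (sqrt t / R)
  have hdiv : HasDerivAt (fun t : ℝ => Real.sqrt t / R) (1 / (2 * Real.sqrt s) / R) s :=
    hds.div_const R
  have hne1 : Real.sqrt s / R ≠ -1 := by
    have := div_pos hA hR; intro hc; rw [hc] at this; linarith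
  have hne2 : Real.sqrt s / R ≠ 1 := by
    have : Real.sqrt s / R < 1 := (div_lt_one hR).2 hAR
    linarith
  have harc : HasDerivAt (fun t : ℝ => Real.arcsin (Real.sqrt t / R))
      (1 / Real.sqrt (1 - (Real.sqrt s / R) ^ 2) * (1 / (2 * Real.sqrt s) / R)) s :=
    by have := (Real.hasDerivAt_arcsin hne1 hne2).comp s hdiv; exact this
  have hG : HasDerivAt (GG R)
      (0 + (1 / (2 * Real.sqrt s) / 4 * Real.sqrt (R ^ 2 - s)
        + Real.sqrt s / 4 * (1 / (2 * Real.sqrt (R ^ 2 - s)) * (-1)))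
       - R ^ 2 / 4 * (1 / Real.sqrt (1 - (Real.sqrt s / R) ^ 2) * (1 / (2 * Real.sqrt s) / R))) s := by
    exact ((hasDerivAt_const s (π * R ^ 2 / 8)).add ((hds.div_const 4).mul hdB)).sub
      (harc.const_mul (R ^ 2 / 4))
  convert hG using 1
  have hsq : (1 : ℝ) - (Real.sqrt s / R) ^ 2 = (Real.sqrt (R ^ 2 - s) / R) ^ 2 := by
    field_simp [hA2, hB2]
    rw [hA2, hB2]
  rw [hsq, Real.sqrt_sq (by positivity)]
  set A := Real.sqrt s with hAdef
  set B := Real.sqrt (R ^ 2 - s) with hBdef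
  have key : 0 + (1 / (2 * A) / 4 * B + A / 4 * (1 / (2 * B) * (-1)))
      - R ^ 2 / 4 * (1 / (B / R) * (1 / (2 * A) / R)) = (B ^ 2 - A ^ 2 - R ^ 2) / (8 * A * B) := by
    field_simp
    ring
  rw [key, hA2, hB2]
  rw [← hA2]
  field_simp
  ring

lemma uR2_eq (R : ℝ) : uR2 R = fun w : E2 => GG R (‖w‖ ^ 2) := by
  funext w
  simp [uR2, GG, Real.sqrt_sq (norm_nonneg w)]

lemma hasFDerivAt_uR2 {R : ℝ} (hR : 0 < R) {w : E2} (hw : ‖w‖ < R) (hw0 : w ≠ 0) :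
    HasFDerivAt (uR2 R) ((-(aR R w)) • innerSL ℝ w) w := by
  have h0 : 0 < ‖w‖ ^ 2 := by have := norm_pos_iff.mpr hw0; positivity
  have h1 : ‖w‖ ^ 2 < R ^ 2 := by nlinarith [norm_nonneg w]
  have h := (hasDerivAt_GG hR h0 h1).comp_hasFDerivAt w (hasFDerivAt_normsq w)
  rw [uR2_eq]
  refine h.congr_fderiv ?_
  rw [smul_smul]
  congr 1
  rw [Real.sqrt_sq (norm_nonneg w)]
  unfold aR
  field_simp
  ring

lemma gradient_uR2 {R : ℝ} (hR : 0 < R) {w : E2} (hw : ‖w‖ < R) (hw0 : w ≠ 0) :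
    gradient (uR2 R) w = (-(aR R w)) • w := by
  have h : HasGradientAt (uR2 R) ((-(aR R w)) • w) w := by
    rw [hasGradientAt_iff_hasFDerivAt]
    refine (hasFDerivAt_uR2 hR hw hw0).congr_fderiv ?_
    ext v
    simp [InnerProductSpace.toDual_apply_apply, real_inner_smul_left]
  exact h.gradient

lemma hasFDerivAt_aR {R : ℝ} (hR : 0 < R) {w : E2} (hw : ‖w‖ < R) (hw0 : w ≠ 0) :
    ∃ κ : ℝ, HasFDerivAt (aR R) (κ • innerSL ℝ w) w := by
  have h0 : 0 < ‖w‖ ^ 2 := by have := norm_pos_iff.mpr hw0; positivity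
  have h1 : ‖w‖ ^ 2 < R ^ 2 := by nlinarith [norm_nonneg w]
  have hs' : (0:ℝ) < R ^ 2 - ‖w‖ ^ 2 := by linarith
  have hA : HasDerivAt (fun s : ℝ => Real.sqrt s / (2 * Real.sqrt (R ^ 2 - s)))
      ((1 / (2 * Real.sqrt (‖w‖^2)) * (2 * Real.sqrt (R ^ 2 - ‖w‖^2))
        - Real.sqrt (‖w‖^2) * (2 * (1 / (2 * Real.sqrt (R ^ 2 - ‖w‖^2)) * (-1))))
        / (2 * Real.sqrt (R ^ 2 - ‖w‖^2)) ^ 2) (‖w‖^2) := by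
    have hds : HasDerivAt Real.sqrt (1 / (2 * Real.sqrt (‖w‖^2))) (‖w‖^2) :=
      hasDerivAt_sqrt h0.ne'
    have hsub : HasDerivAt (fun t : ℝ => R ^ 2 - t) (-1) (‖w‖^2) := by
      simpa using (hasDerivAt_id (‖w‖^2)).const_sub (R ^ 2)
    have hdB : HasDerivAt (fun t : ℝ => 2 * Real.sqrt (R ^ 2 - t))
        (2 * (1 / (2 * Real.sqrt (R ^ 2 - ‖w‖^2)) * (-1))) (‖w‖^2) :=
      (((hasDerivAt_sqrt hs'.ne').comp _ hsub)).const_mul 2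
    exact hds.div hdB (by positivity)
  refine ⟨?_ * 2, ?_⟩
  · exact ((1 / (2 * Real.sqrt (‖w‖^2)) * (2 * Real.sqrt (R ^ 2 - ‖w‖^2))
        - Real.sqrt (‖w‖^2) * (2 * (1 / (2 * Real.sqrt (R ^ 2 - ‖w‖^2)) * (-1))))
        / (2 * Real.sqrt (R ^ 2 - ‖w‖^2)) ^ 2)
  · have h := hA.comp_hasFDerivAt w (hasFDerivAt_normsq w)
    have he : aR R = (fun s : ℝ => Real.sqrt s / (2 * Real.sqrt (R ^ 2 - s))) ∘ (fun w : E2 => ‖w‖ ^ 2) := by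
      funext v
      simp [aR, Function.comp, Real.sqrt_sq (norm_nonneg v)]
    rw [he]
    refine h.congr_fderiv ?_
    rw [smul_smul]

lemma sqrt_one_sub {R r : ℝ} (hR : 0 < R) (h1 : r < R) :
    Real.sqrt (1 - (r / R) ^ 2) = Real.sqrt (R ^ 2 - r ^ 2) / R := by
  rw [show (1 : ℝ) - (r / R) ^ 2 = (R ^ 2 - r ^ 2) / R ^ 2 by field_simp,
    Real.sqrt_div' _ (by positivity : (0:ℝ) ≤ R ^ 2), Real.sqrt_sq hR.le]

lemma hasDerivAt_theta {R C r : ℝ} (hR : 0 < R) (h0 : 0 < r) (h1 : r < R) :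
    HasDerivAt (fun t => C - Real.arcsin (t / R)) (-(1 / Real.sqrt (R ^ 2 - r ^ 2))) r := by
  have hne1 : r / R ≠ -1 := by
    have := div_pos h0 hR; intro hc; rw [hc] at this; linarith
  have hne2 : r / R ≠ 1 := by
    have : r / R < 1 := (div_lt_one hR).2 h1; linarith
  have hdiv : HasDerivAt (fun t : ℝ => t / R) (1 / R) r := by
    simpa using (hasDerivAt_id r).div_const R
  have harc := (Real.hasDerivAt_arcsin hne1 hne2).comp r hdiv
  have h := (hasDerivAt_const r C).sub harc
  refine h.congr_deriv ?_
  rw [sqrt_one_sub hR h1]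
  have hB : (0:ℝ) < Real.sqrt (R ^ 2 - r ^ 2) := Real.sqrt_pos.2 (by nlinarith)
  field_simp
  ring

theorem transport (R : ℝ) (hR : 0 < R) (ρ φ : EuclideanSpace ℝ (Fin 2) → ℝ)
    (hρ : ContDiffOn ℝ 1 ρ (ball 0 R)) (hφ : ContDiffOn ℝ 2 φ (ball 0 R))
    (h : ∀ z ∈ ball (0 : EuclideanSpace ℝ (Fin 2)) R,
      gradient φ z = ρ z • (gradient (uR2 R) z + (1 / 2 : ℝ) • zperp2 z))
    {z : E2} (hz : z ∈ ball 0 R) (hz0 : z ≠ 0) :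
    fderiv ℝ ρ z (VV1 R z • ee0 - VV0 R z • ee1) = ρ z := by
  have hUopen : IsOpen (ball (0 : E2) R ∩ {0}ᶜ) := isOpen_ball.inter isOpen_compl_singleton
  have hzU : z ∈ ball (0 : E2) R ∩ {0}ᶜ := ⟨hz, hz0⟩
  have hUnhds : ball (0 : E2) R ∩ {0}ᶜ ∈ nhds z := hUopen.mem_nhds hzU
  -- pointwise formula for the components of fderiv φ
  have hptw : ∀ i : Fin 2, ∀ w ∈ ball (0 : E2) R ∩ {0}ᶜ,
      fderiv ℝ φ w (EuclideanSpace.single i 1) =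
        ρ w * (((-(aR R w)) • w + (1 / 2 : ℝ) • zperp2 w) i) := by
    intro i w hw
    have hgrad : gradient φ w = ρ w • ((-(aR R w)) • w + (1 / 2 : ℝ) • zperp2 w) := by
      rw [h w hw.1, gradient_uR2 hR (by simpa using hw.1) hw.2]
    have : fderiv ℝ φ w (EuclideanSpace.single i 1) =
        @inner ℝ _ _ (gradient φ w) (EuclideanSpace.single i 1) := by
      rw [gradient]
      exact (InnerProductSpace.toDual_symm_apply).symm
    rw [this, hgrad, EuclideanSpace.inner_single_right]
    simp
    ring
  -- the two component functions near z
  have hev1 : (fun w => fderiv ℝ φ w ee1) =ᶠ[nhds z] (fun w => ρ w * VV1 R w) := by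
    filter_upwards [hUnhds] with w hw
    rw [ee1, hptw 1 w hw]
    congr 1
    simp [VV1, zperp2]
    ring
  have hev0 : (fun w => fderiv ℝ φ w ee0) =ᶠ[nhds z] (fun w => ρ w * VV0 R w) := by
    filter_upwards [hUnhds] with w hw
    rw [ee0, hptw 0 w hw]
    congr 1
    simp [VV0, zperp2]
  -- second derivative symmetry
  have hφz : ContDiffAt ℝ 2 φ z := hφ.contDiffAt (isOpen_ball.mem_nhds hz)
  have hd2 : HasFDerivAt (fderiv ℝ φ) (fderiv ℝ (fderiv ℝ φ) z) z :=
    ((hφz.fderiv_right (m := 1) (by norm_num)).differentiableAt one_ne_zero).hasFDerivAt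
  have hsymm : fderiv ℝ (fderiv ℝ φ) z ee0 ee1 = fderiv ℝ (fderiv ℝ φ) z ee1 ee0 :=
    (hφz.isSymmSndFDerivAt (by simp [minSmoothness_of_isRCLikeNormedField])).eq ee0 ee1
  have hB1 : HasFDerivAt (fun w => fderiv ℝ φ w ee1)
      ((ContinuousLinearMap.apply ℝ ℝ ee1).comp (fderiv ℝ (fderiv ℝ φ) z)) z :=
    (ContinuousLinearMap.apply ℝ ℝ ee1).hasFDerivAt.comp z hd2
  have hB0 : HasFDerivAt (fun w => fderiv ℝ φ w ee0)
      ((ContinuousLinearMap.apply ℝ ℝ ee0).comp (fderiv ℝ (fderiv ℝ φ) z)) z :=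
    (ContinuousLinearMap.apply ℝ ℝ ee0).hasFDerivAt.comp z hd2
  -- product representation
  have hρz : HasFDerivAt ρ (fderiv ℝ ρ z) z :=
    ((hρ.contDiffAt (isOpen_ball.mem_nhds hz)).differentiableAt one_ne_zero).hasFDerivAt
  obtain ⟨κ, hκ⟩ := hasFDerivAt_aR hR (by simpa using hz) hz0
  have hproj0 : HasFDerivAt (fun w : E2 => w 0) (EuclideanSpace.proj (0 : Fin 2) : E2 →L[ℝ] ℝ) z :=
    (EuclideanSpace.proj (0 : Fin 2) : E2 →L[ℝ] ℝ).hasFDerivAt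
  have hproj1 : HasFDerivAt (fun w : E2 => w 1) (EuclideanSpace.proj (1 : Fin 2) : E2 →L[ℝ] ℝ) z :=
    (EuclideanSpace.proj (1 : Fin 2) : E2 →L[ℝ] ℝ).hasFDerivAt
  have hV1 : HasFDerivAt (VV1 R)
      (((fun w => -aR R w) z • (EuclideanSpace.proj (1 : Fin 2) : E2 →L[ℝ] ℝ)
        + (fun w : E2 => w 1) z • -(κ • innerSL ℝ z))
       - (2:ℝ)⁻¹ • (EuclideanSpace.proj (0 : Fin 2) : E2 →L[ℝ] ℝ)) z :=
    (hκ.neg.mul hproj1).sub (hproj0.const_mul 2⁻¹)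
  have hV0 : HasFDerivAt (VV0 R)
      (((fun w => -aR R w) z • (EuclideanSpace.proj (0 : Fin 2) : E2 →L[ℝ] ℝ)
        + (fun w : E2 => w 0) z • -(κ • innerSL ℝ z))
       + (2:ℝ)⁻¹ • (EuclideanSpace.proj (1 : Fin 2) : E2 →L[ℝ] ℝ)) z :=
    (hκ.neg.mul hproj0).add (hproj1.const_mul 2⁻¹)
  have hg1 := hρz.mul hV1
  have hg0 := hρz.mul hV0
  have heq1 := hB1.unique (hg1.congr_of_eventuallyEq hev1)
  have heq0 := hB0.unique (hg0.congr_of_eventuallyEq hev0)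
  -- evaluate
  have hz00 : @inner ℝ _ _ z ee0 = z 0 := by
    rw [ee0, EuclideanSpace.inner_single_right]; simp
  have hz11 : @inner ℝ _ _ z ee1 = z 1 := by
    rw [ee1, EuclideanSpace.inner_single_right]; simp
  have hee00 : (ee0 : E2) 0 = 1 := by simp [ee0]
  have hee01 : (ee0 : E2) 1 = 0 := by simp [ee0]
  have hee10 : (ee1 : E2) 0 = 0 := by simp [ee1]
  have hee11 : (ee1 : E2) 1 = 1 := by simp [ee1]
  have e1 : fderiv ℝ (fderiv ℝ φ) z ee0 ee1
      = ρ z * (-(κ * (z 0 * z 1)) - 2⁻¹) + VV1 R z * fderiv ℝ ρ z ee0 := by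
    have := congrArg (fun L : E2 →L[ℝ] ℝ => L ee0) heq1
    simpa [ContinuousLinearMap.add_apply, ContinuousLinearMap.sub_apply,
      ContinuousLinearMap.smul_apply, smul_eq_mul, innerSL_apply_apply, hee00, hee01, hz00,
      mul_comm, mul_assoc, mul_left_comm] using this
  have e0 : fderiv ℝ (fderiv ℝ φ) z ee1 ee0
      = -(κ * (ρ z * (z 0 * z 1))) + ρ z * 2⁻¹ + VV0 R z * fderiv ℝ ρ z ee1 := by
    have := congrArg (fun L : E2 →L[ℝ] ℝ => L ee1) heq0
    simpa [ContinuousLinearMap.add_apply, ContinuousLinearMap.sub_apply,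
      ContinuousLinearMap.smul_apply, smul_eq_mul, innerSL_apply_apply, hee10, hee11, hz11,
      mul_comm, mul_assoc, mul_left_comm] using this
  have key : VV1 R z * fderiv ℝ ρ z ee0 - VV0 R z * fderiv ℝ ρ z ee1 = ρ z := by
    rw [e1, e0] at hsymm
    linarith
  rw [map_sub, map_smul, map_smul, smul_eq_mul, smul_eq_mul]
  exact key

lemma gamma_apply (x y : ℝ) : (x • ee0 + y • ee1 : E2) 0 = x ∧ (x • ee0 + y • ee1 : E2) 1 = y := by
  constructor <;> simp [ee0, ee1, EuclideanSpace.single_apply]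

lemma gamma_norm {r t : ℝ} (hr : 0 ≤ r) :
    ‖((r * Real.cos t) • ee0 + (r * Real.sin t) • ee1 : E2)‖ = r := by
  rw [EuclideanSpace.norm_eq]
  rw [Fin.sum_univ_two, (gamma_apply _ _).1, (gamma_apply _ _).2]
  simp only [Real.norm_eq_abs, sq_abs]
  rw [show (r * Real.cos t) ^ 2 + (r * Real.sin t) ^ 2 = r ^ 2 by
    have := Real.sin_sq_add_cos_sq t; nlinarith]
  exact Real.sqrt_sq hr

-- derivative of the curve
lemma hasDerivAt_gamma {R C r : ℝ} (hR : 0 < R) (h0 : 0 < r) (h1 : r < R) :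
    HasDerivAt (fun t : ℝ => (t * Real.cos (C - Real.arcsin (t / R))) • ee0
        + (t * Real.sin (C - Real.arcsin (t / R))) • ee1)
      ((Real.cos (C - Real.arcsin (r / R))
          + r * (1 / Real.sqrt (R ^ 2 - r ^ 2)) * Real.sin (C - Real.arcsin (r / R))) • ee0
        + (Real.sin (C - Real.arcsin (r / R))
          - r * (1 / Real.sqrt (R ^ 2 - r ^ 2)) * Real.cos (C - Real.arcsin (r / R))) • ee1) r := by
  have hθ := hasDerivAt_theta (C := C) hR h0 h1
  have hcos : HasDerivAt (fun t : ℝ => Real.cos (C - Real.arcsin (t / R)))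
      (-Real.sin (C - Real.arcsin (r / R)) * (-(1 / Real.sqrt (R ^ 2 - r ^ 2)))) r := hθ.cos
  have hsin : HasDerivAt (fun t : ℝ => Real.sin (C - Real.arcsin (t / R)))
      (Real.cos (C - Real.arcsin (r / R)) * (-(1 / Real.sqrt (R ^ 2 - r ^ 2)))) r := hθ.sin
  have hc1 : HasDerivAt (fun t : ℝ => t * Real.cos (C - Real.arcsin (t / R)))
      (1 * Real.cos (C - Real.arcsin (r / R))
        + r * (-Real.sin (C - Real.arcsin (r / R)) * (-(1 / Real.sqrt (R ^ 2 - r ^ 2))))) r :=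
    (hasDerivAt_id r).mul hcos
  have hc2 : HasDerivAt (fun t : ℝ => t * Real.sin (C - Real.arcsin (t / R)))
      (1 * Real.sin (C - Real.arcsin (r / R))
        + r * (Real.cos (C - Real.arcsin (r / R)) * (-(1 / Real.sqrt (R ^ 2 - r ^ 2))))) r :=
    (hasDerivAt_id r).mul hsin
  have := (hc1.smul_const (ee0 : E2)).add (hc2.smul_const (ee1 : E2))
  refine this.congr_deriv ?_
  congr 1 <;> ring_nf

lemma polar_exists {z : E2} (hz : z ≠ 0) :
    ∃ t : ℝ, z 0 = ‖z‖ * Real.cos t ∧ z 1 = ‖z‖ * Real.sin t := by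
  set c : ℂ := ⟨z 0, z 1⟩ with hc
  have hc0 : c ≠ 0 := by
    intro hcon
    apply hz
    have h0 : z 0 = 0 := congrArg Complex.re hcon
    have h1 : z 1 = 0 := congrArg Complex.im hcon
    ext i; fin_cases i <;> simpa
  have habs : ‖c‖ = ‖z‖ := by
    rw [Complex.norm_def, Complex.normSq_apply, EuclideanSpace.norm_eq, Fin.sum_univ_two]
    simp [hc]
    ring_nf
  have habs0 : ‖c‖ ≠ 0 := by simpa using hc0
  refine ⟨Complex.arg c, ?_, ?_⟩
  · rw [← habs, Complex.cos_arg hc0]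
    field_simp
    simp [hc]
  · rw [← habs, Complex.sin_arg]
    field_simp
    simp [hc]

theorem rho_zero (R : ℝ) (hR : 0 < R) (ρ φ : EuclideanSpace ℝ (Fin 2) → ℝ)
    (hρ : ContDiffOn ℝ 1 ρ (ball 0 R)) (hφ : ContDiffOn ℝ 2 φ (ball 0 R))
    (h : ∀ z ∈ ball (0 : EuclideanSpace ℝ (Fin 2)) R,
      gradient φ z = ρ z • (gradient (uR2 R) z + (1 / 2 : ℝ) • zperp2 z))
    {z₀ : E2} (hz : z₀ ∈ ball 0 R) (h0 : z₀ ≠ 0) : ρ z₀ = 0 := by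
  have hr1R : ‖z₀‖ < R := by simpa [mem_ball, dist_zero_right] using hz
  have hr1 : 0 < ‖z₀‖ := norm_pos_iff.2 h0
  obtain ⟨t₀, ht0, ht1⟩ := polar_exists h0
  set C := t₀ + Real.arcsin (‖z₀‖ / R) with hC
  set θ : ℝ → ℝ := fun r => C - Real.arcsin (r / R) with hθdef
  set γ : ℝ → E2 := fun r => (r * Real.cos (θ r)) • ee0 + (r * Real.sin (θ r)) • ee1 with hγdef
  have hγnorm : ∀ r : ℝ, 0 ≤ r → ‖γ r‖ = r := fun r hr => gamma_norm hr
  have hγball : ∀ r ∈ Set.Ioo (0:ℝ) R, γ r ∈ ball (0:E2) R ∧ γ r ≠ 0 := by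
    intro r hr
    have hn := hγnorm r hr.1.le
    constructor
    · rw [mem_ball, dist_zero_right, hn]; exact hr.2
    · intro hcon; rw [hcon, norm_zero] at hn; exact absurd hn.symm hr.1.ne'
  set F : ℝ → ℝ := fun r => ρ (γ r) * r ^ 2 with hFdef
  -- derivative of F vanishes on (0, R)
  have hF0 : ∀ r ∈ Set.Ioo (0:ℝ) R, HasDerivAt F 0 r := by
    intro r hr
    obtain ⟨hrb, hrne⟩ := hγball r hr
    have hB : (0:ℝ) < Real.sqrt (R ^ 2 - r ^ 2) := Real.sqrt_pos.2 (by nlinarith [hr.1, hr.2])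
    have hρw : HasFDerivAt ρ (fderiv ℝ ρ (γ r)) (γ r) :=
      ((hρ.contDiffAt (isOpen_ball.mem_nhds hrb)).differentiableAt one_ne_zero).hasFDerivAt
    have hγ' := hasDerivAt_gamma (C := C) hR hr.1 hr.2
    have hθr : C - Real.arcsin (r / R) = θ r := rfl
    rw [hθr] at hγ'
    -- the curve velocity is a multiple of the transport direction
    have hvec : (Real.cos (θ r)
          + r * (1 / Real.sqrt (R ^ 2 - r ^ 2)) * Real.sin (θ r)) • ee0
        + (Real.sin (θ r)
          - r * (1 / Real.sqrt (R ^ 2 - r ^ 2)) * Real.cos (θ r)) • ee1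
        = (-(2/r)) • (VV1 R (γ r) • ee0 - VV0 R (γ r) • ee1) := by
      have ha : aR R (γ r) = r / (2 * Real.sqrt (R ^ 2 - r ^ 2)) := by
        rw [aR, hγnorm r hr.1.le]
      have hg0 : (γ r) 0 = r * Real.cos (θ r) := (gamma_apply _ _).1
      have hg1 : (γ r) 1 = r * Real.sin (θ r) := (gamma_apply _ _).2
      have hV1 : VV1 R (γ r) = -(r / (2 * Real.sqrt (R ^ 2 - r ^ 2))) * (r * Real.sin (θ r))
          - 2⁻¹ * (r * Real.cos (θ r)) := by rw [VV1, ha, hg0, hg1]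
      have hV0 : VV0 R (γ r) = -(r / (2 * Real.sqrt (R ^ 2 - r ^ 2))) * (r * Real.cos (θ r))
          + 2⁻¹ * (r * Real.sin (θ r)) := by rw [VV0, ha, hg0, hg1]
      have hBne : Real.sqrt (R ^ 2 - r ^ 2) ≠ 0 := hB.ne'
      have hrne' : r ≠ 0 := hr.1.ne'
      have s1 : Real.cos (θ r) + r * (1 / Real.sqrt (R ^ 2 - r ^ 2)) * Real.sin (θ r)
          = -(2/r) * VV1 R (γ r) := by
        rw [hV1]; field_simp [hrne', hBne]; ring
      have s0 : Real.sin (θ r) - r * (1 / Real.sqrt (R ^ 2 - r ^ 2)) * Real.cos (θ r)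
          = -(-(2/r) * VV0 R (γ r)) := by
        rw [hV0]; field_simp [hrne', hBne]; ring
      rw [smul_sub, smul_smul, smul_smul, s1, s0, neg_smul, ← sub_eq_add_neg]
    rw [hvec] at hγ'
    have hchain := hρw.comp_hasDerivAt r hγ'
    have hmul := hchain.mul (hasDerivAt_pow 2 r)
    have hD : fderiv ℝ ρ (γ r) ((-(2/r)) • (VV1 R (γ r) • ee0 - VV0 R (γ r) • ee1))
        = -(2/r) * ρ (γ r) := by
      rw [map_smul, smul_eq_mul, transport R hR ρ φ hρ hφ h hrb hrne]
    have hgoal : HasDerivAt (fun y => (ρ ∘ γ) y * y ^ 2)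
        ((fderiv ℝ ρ (γ r)) (-(2 / r) • (VV1 R (γ r) • ee0 - VV0 R (γ r) • ee1)) * r ^ 2
          + (ρ ∘ γ) r * ((2:ℕ) * r ^ (2 - 1))) r := hmul
    have hzero : (fderiv ℝ ρ (γ r)) (-(2 / r) • (VV1 R (γ r) • ee0 - VV0 R (γ r) • ee1)) * r ^ 2
          + (ρ ∘ γ) r * ((2:ℕ) * r ^ (2 - 1)) = 0 := by
      rw [hD]
      simp only [Function.comp_apply]
      push_cast
      field_simp [hr.1.ne']
      ring
    rw [hzero] at hgoal
    exact hgoal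
  -- F is constant on (0, R)
  have hconst : ∀ r ∈ Set.Ioo (0:ℝ) R, F r = F ‖z₀‖ := by
    intro r hr
    refine (convex_Ioo (0:ℝ) R).is_const_of_fderivWithin_eq_zero
      (fun x hx => (hF0 x hx).differentiableAt.differentiableWithinAt) ?_ hr ⟨hr1, hr1R⟩
    intro x hx
    rw [fderivWithin_of_isOpen isOpen_Ioo hx]
    have hfd : HasFDerivAt F (ContinuousLinearMap.smulRight (1 : ℝ →L[ℝ] ℝ) 0) x :=
      (hF0 x hx).hasFDerivAt
    rw [hfd.fderiv]
    ext v
    simp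
  -- γ ‖z₀‖ = z₀
  have hγz : γ ‖z₀‖ = z₀ := by
    have hθz : θ ‖z₀‖ = t₀ := by rw [hθdef]; simp [hC]
    have hc0 : (γ ‖z₀‖) 0 = z₀ 0 := by
      simp only [hγdef]
      rw [(gamma_apply (‖z₀‖ * Real.cos (θ ‖z₀‖)) (‖z₀‖ * Real.sin (θ ‖z₀‖))).1, hθz, ← ht0]
    have hc1 : (γ ‖z₀‖) 1 = z₀ 1 := by
      simp only [hγdef]
      rw [(gamma_apply (‖z₀‖ * Real.cos (θ ‖z₀‖)) (‖z₀‖ * Real.sin (θ ‖z₀‖))).2, hθz, ← ht1]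
    ext i
    fin_cases i
    · exact hc0
    · exact hc1
  -- limit of F at 0⁺
  have hγtend : Filter.Tendsto γ (nhdsWithin 0 (Set.Ioi 0)) (nhdsWithin 0 (ball (0:E2) R)) := by
    apply tendsto_nhdsWithin_of_tendsto_nhds_of_eventually_within
    · have hid : Filter.Tendsto (fun r : ℝ => r) (nhdsWithin 0 (Set.Ioi 0)) (nhds 0) :=
        Filter.tendsto_id.mono_left nhdsWithin_le_nhds
      apply squeeze_zero_norm' _ hid
      filter_upwards [self_mem_nhdsWithin] with r (hr : r ∈ Set.Ioi 0)
      rw [hγnorm r (le_of_lt hr)]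
    · filter_upwards [Ioo_mem_nhdsGT_of_mem (Set.left_mem_Ico.2 hR)] with r hr
      exact (hγball r hr).1
  have hρ0 : Filter.Tendsto (fun r => ρ (γ r)) (nhdsWithin 0 (Set.Ioi 0)) (nhds (ρ 0)) :=
    ((hρ.continuousOn 0 (mem_ball_self hR)).tendsto).comp hγtend
  have hsq : Filter.Tendsto (fun r : ℝ => r ^ 2) (nhdsWithin 0 (Set.Ioi 0)) (nhds 0) := by
    have := ((continuous_pow 2).tendsto (0:ℝ)).mono_left (nhdsWithin_le_nhds (s := Set.Ioi 0))
    simpa using this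
  have hlim1 : Filter.Tendsto F (nhdsWithin 0 (Set.Ioi 0)) (nhds 0) := by
    have := hρ0.mul hsq
    simpa using this
  have hlim2 : Filter.Tendsto F (nhdsWithin 0 (Set.Ioi 0)) (nhds (F ‖z₀‖)) := by
    apply Filter.Tendsto.congr' _ tendsto_const_nhds
    filter_upwards [Ioo_mem_nhdsGT_of_mem (Set.left_mem_Ico.2 hR)] with r hr
    exact (hconst r hr).symm
  have : F ‖z₀‖ = 0 := tendsto_nhds_unique hlim2 hlim1
  rw [hFdef] at this
  simp only [hγz] at this
  have h2 : ρ z₀ * ‖z₀‖ ^ 2 = 0 := this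
  have := mul_eq_zero.1 h2
  rcases this with h' | h'
  · exact h'
  · exact absurd h' (by positivity)

end StmtAux

theorem stmt_17 (R : ℝ) (hR : 0 < R) (ρ φ : EuclideanSpace ℝ (Fin 2) → ℝ)
    (hρ : ContDiffOn ℝ 1 ρ (ball 0 R)) (hφ : ContDiffOn ℝ 2 φ (ball 0 R))
    (h : ∀ z ∈ ball (0 : EuclideanSpace ℝ (Fin 2)) R,
      gradient φ z = ρ z • (gradient (uR2 R) z + (1 / 2 : ℝ) • zperp2 z)) :
    ∀ z ∈ ball (0 : EuclideanSpace ℝ (Fin 2)) R, ρ z = 0 ∧ gradient φ z = 0 := by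
  have hrz : ∀ w ∈ ball (0 : E2) R, w ≠ 0 → ρ w = 0 := fun w hw hw0 =>
    rho_zero R hR ρ φ hρ hφ h hw hw0
  have hρ0 : ρ 0 = 0 := by
    set w : ℕ → E2 := fun n => (R / (2 * (n + 1))) • (ee0 : E2) with hwdef
    have hwnorm : ∀ n : ℕ, ‖w n‖ = R / (2 * (n + 1)) := by
      intro n
      rw [hwdef]
      simp only [norm_smul, Real.norm_eq_abs]
      rw [show ‖(ee0 : E2)‖ = 1 by simp [ee0, EuclideanSpace.norm_single], mul_one]
      rw [abs_of_pos (by positivity)]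
    have hwball : ∀ n : ℕ, w n ∈ ball (0 : E2) R := by
      intro n
      rw [mem_ball, dist_zero_right, hwnorm n]
      rw [div_lt_iff₀ (by positivity)]
      nlinarith [Nat.cast_nonneg (α := ℝ) n]
    have hwne : ∀ n : ℕ, w n ≠ 0 := by
      intro n hcon
      have h1 := hwnorm n
      rw [hcon, norm_zero] at h1
      have h2 : (0:ℝ) < R / (2 * (n + 1)) := by positivity
      rw [← h1] at h2
      exact lt_irrefl _ h2
    have hwtend : Filter.Tendsto w Filter.atTop (nhds (0 : E2)) := by
      have hs : Filter.Tendsto (fun n : ℕ => R / (2 * ((n : ℝ) + 1))) Filter.atTop (nhds 0) := by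
        have h1 : Filter.Tendsto (fun n : ℕ => 1 / ((n : ℝ) + 1)) Filter.atTop (nhds 0) :=
          tendsto_one_div_add_atTop_nhds_zero_nat
        have := h1.const_mul (R / 2)
        simp only [mul_zero] at this
        convert this using 2 with n
        field_simp
      have := hs.smul_const (ee0 : E2)
      simpa [hwdef] using this
    have hwtendW : Filter.Tendsto w Filter.atTop (nhdsWithin (0 : E2) (ball 0 R)) := by
      apply tendsto_nhdsWithin_of_tendsto_nhds_of_eventually_within _ hwtend
      exact Filter.Eventually.of_forall hwball
    have hcont : ContinuousWithinAt ρ (ball (0:E2) R) 0 := hρ.continuousOn 0 (mem_ball_self hR)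
    have hlimA : Filter.Tendsto (fun n => ρ (w n)) Filter.atTop (nhds (ρ 0)) :=
      hcont.tendsto.comp hwtendW
    have hlimB : Filter.Tendsto (fun n => ρ (w n)) Filter.atTop (nhds 0) := by
      have : (fun n => ρ (w n)) = fun _ => (0:ℝ) := by
        funext n; exact hrz (w n) (hwball n) (hwne n)
      rw [this]; exact tendsto_const_nhds
    exact tendsto_nhds_unique hlimA hlimB
  intro z hz
  have hz0 : ρ z = 0 := by
    by_cases hc : z = 0
    · rw [hc]; exact hρ0
    · exact hrz z hz hc
  exact ⟨hz0, by rw [h z hz, hz0, zero_smul]⟩
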